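/- Let G ⊆ ℂ be a nonempty connected open set, X a complex Banach space, and f : G → X an analytic map such that the linear span of {f(λ) : λ ∈ G} is dense in X. Then for every nonempty open subset Ω ⊆ G, the linear span of {f(λ) : λ ∈ Ω} is also dense in X. -/

import Mathlib

/-- If `f : G → X` is analytic on a nonempty connected open set `G ⊆ ℂ`
with values in a complex Banach space `X` and the span of `f '' G` is dense, then the
span of `f '' Ω` is dense for every nonempty open `Ω ⊆ G`. -/
theorem stmt_0 (X : Type*) [NormedAddCommGroup X] [NormedSpace ℂ X] [CompleteSpace X]
    (G : Set ℂ) (hG : IsOpen G) (hGne : G.Nonempty) (hGconn : IsConnected G)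
    (f : ℂ → X) (hf : DifferentiableOn ℂ f G)
    (hdense : Dense (Submodule.span ℂ (f '' G) : Set X))
    (Ω : Set ℂ) (hΩ : IsOpen Ω) (hΩne : Ω.Nonempty) (hΩsub : Ω ⊆ G) :
    Dense (Submodule.span ℂ (f '' Ω) : Set X) := by
  by_contra hnd
  -- there is a point `x` not in the closure of the span of `f '' Ω`
  set p : Submodule ℂ X := (Submodule.span ℂ (f '' Ω)).topologicalClosure with hp
  have hpclosed : IsClosed (p : Set X) :=
    (Submodule.span ℂ (f '' Ω)).isClosed_topologicalClosure
  have hpne : p ≠ ⊤ := by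
    intro h
    apply hnd
    have : (p : Set X) = Set.univ := by rw [h]; rfl
    have hcl : closure (Submodule.span ℂ (f '' Ω) : Set X) = Set.univ := this
    rw [dense_iff_closure_eq]
    exact hcl
  obtain ⟨x, hx⟩ : ∃ x : X, x ∉ p := by
    by_contra h
    push_neg at h
    exact hpne (Submodule.eq_top_iff'.2 h)
  haveI : IsClosed (p : Set X) := hpclosed
  -- quotient map as a continuous linear map
  let π : X →L[ℂ] X ⧸ p := ⟨p.mkQ, continuous_quot_mk⟩
  have hxne : π x ≠ 0 := by
    change p.mkQ x ≠ 0
    simpa [π, Submodule.Quotient.mk_eq_zero] using hx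
  obtain ⟨g, hg⟩ := SeparatingDual.exists_eq_one (R := ℂ) hxne
  let φ : X →L[ℂ] ℂ := g.comp π
  -- φ vanishes on f '' Ω
  have hφΩ : ∀ z ∈ Ω, φ (f z) = 0 := by
    intro z hz
    have hmem : f z ∈ p := Submodule.le_topologicalClosure _
      (Submodule.subset_span ⟨z, hz, rfl⟩)
    have : π (f z) = 0 := by
      change p.mkQ (f z) = 0
      simpa [π, Submodule.Quotient.mk_eq_zero] using hmem
    simp [φ, this]
  -- the analytic function φ ∘ f vanishes on Ω, hence on G
  have han : AnalyticOnNhd ℂ (fun z => φ (f z)) G :=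
    (φ.differentiable.comp_differentiableOn hf).analyticOnNhd hG
  obtain ⟨z₀, hz₀⟩ := hΩne
  have hev : (fun z => φ (f z)) =ᶠ[nhds z₀] 0 := by
    filter_upwards [hΩ.mem_nhds hz₀] with z hz using hφΩ z hz
  have hzero : Set.EqOn (fun z => φ (f z)) 0 G :=
    han.eqOn_zero_of_preconnected_of_eventuallyEq_zero hGconn.isPreconnected
      (hΩsub hz₀) hev
  -- hence φ vanishes on the span of f '' G, which is dense, so φ = 0
  have hspan : ∀ y ∈ Submodule.span ℂ (f '' G), φ y = 0 := by
    intro y hy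
    refine Submodule.span_induction ?_ ?_ ?_ ?_ hy
    · rintro _ ⟨z, hz, rfl⟩; exact hzero hz
    · simp
    · intro a b _ _ ha hb; simp [ha, hb]
    · intro c a _ ha; simp [ha]
  have hφ0 : φ = 0 := by
    ext y
    have : y ∈ closure (Submodule.span ℂ (f '' G) : Set X) := hdense y
    have hc : Continuous fun v : X => φ v := φ.continuous
    have key : Set.EqOn (⇑φ) 0 (Submodule.span ℂ (f '' G) : Set X) := fun v hv => hspan v hv
    have := Continuous.ext_on hdense φ.continuous continuous_const key
    exact congrFun this y
  have : φ x = 1 := by simp [φ, hg]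
  rw [hφ0] at this
  simp at this
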